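/- A closed prenex QBF is false if and only if there exists a set of Herbrand functions, one for each universal variable y (depending only on existential variables left of y), such that for every complete assignment of the existential variables, the assignment completed by the Herbrand values falsifies the matrix. -/

import Mathlib

inductive Fml where
  | tru | fls
  | var (v : ℕ)
  | neg (φ : Fml)
  | conj (φ ψ : Fml)
  | disj (φ ψ : Fml)

def Fml.eval (α : ℕ → Bool) : Fml → Bool
  | .tru => true
  | .fls => false
  | .var v => α v
  | .neg φ => !(φ.eval α)
  | .conj φ ψ => φ.eval α && ψ.eval α
  | .disj φ ψ => φ.eval α || ψ.eval α

def Fml.vars : Fml → Finset ℕ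
  | .tru => ∅
  | .fls => ∅
  | .var v => {v}
  | .neg φ => φ.vars
  | .conj φ ψ => φ.vars ∪ ψ.vars
  | .disj φ ψ => φ.vars ∪ ψ.vars

def Fml.substC (u : ℕ) (c : Bool) : Fml → Fml
  | .tru => .tru
  | .fls => .fls
  | .var v => if v = u then (if c then .tru else .fls) else .var v
  | .neg φ => .neg (φ.substC u c)
  | .conj φ ψ => .conj (φ.substC u c) (ψ.substC u c)
  | .disj φ ψ => .disj (φ.substC u c) (ψ.substC u c)

/-- A prenex quantifier prefix: a list of (isExistential, variable). -/
abbrev Prefix := List (Bool × ℕ)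

/-- The universal variables quantified to the left of x in the prefix. -/
def univsBefore : Prefix → ℕ → Finset ℕ
  | [], _ => ∅
  | (q, v) :: P, x =>
      if v = x then ∅ else (if q then univsBefore P x else insert v (univsBefore P x))

/-- Skolem-function semantics of truth for a closed prenex QBF. -/
def skTrue (P : Prefix) (φ : Fml) : Prop :=
  ∃ σ : ℕ → (ℕ → Bool) → Bool,
    (∀ x : ℕ, (true, x) ∈ P →
      ∀ τ τ' : ℕ → Bool, (∀ w ∈ univsBefore P x, τ w = τ' w) → σ x τ = σ x τ') ∧
    ∀ τ : ℕ → Bool,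
      φ.eval (fun w => if (true, w) ∈ P then σ w τ else τ w) = true


/-- The existential variables quantified to the left of y in the prefix. -/
def existsBefore : Prefix → ℕ → Finset ℕ
  | [], _ => ∅
  | (q, v) :: P, x =>
      if v = x then ∅ else (if q then insert v (existsBefore P x) else existsBefore P x)

/-- Herbrand-function semantics of falsity: there are countermove functions for
the universal variables, each depending only on the existential variables to its
left, falsifying the matrix under every existential assignment. -/
def hbFalse (P : Prefix) (φ : Fml) : Prop :=
  ∃ θ : ℕ → (ℕ → Bool) → Bool,
    (∀ y : ℕ, (false, y) ∈ P →
      ∀ ε ε' : ℕ → Bool, (∀ w ∈ existsBefore P y, ε w = ε' w) → θ y ε = θ y ε') ∧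
    ∀ ε : ℕ → Bool,
      φ.eval (fun w => if (false, w) ∈ P then θ w ε else ε w) = false

section Aux

open Classical List

lemma eval_congr' (φ : Fml) (α β : ℕ → Bool) (h : ∀ v ∈ φ.vars, α v = β v) :
    φ.eval α = φ.eval β := by
  induction φ with
  | tru => rfl
  | fls => rfl
  | var v => exact h v (by simp [Fml.vars])
  | neg φ ih => simp only [Fml.eval]; rw [ih h]
  | conj φ ψ ih1 ih2 =>
      simp only [Fml.eval]
      rw [ih1 fun v hv => h v (by simp [Fml.vars, hv]),
          ih2 fun v hv => h v (by simp [Fml.vars, hv])]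
  | disj φ ψ ih1 ih2 =>
      simp only [Fml.eval]
      rw [ih1 fun v hv => h v (by simp [Fml.vars, hv]),
          ih2 fun v hv => h v (by simp [Fml.vars, hv])]

lemma substC_eval (φ : Fml) (u : ℕ) (c : Bool) (α : ℕ → Bool) :
    (φ.substC u c).eval α = φ.eval (fun w => if w = u then c else α w) := by
  induction φ with
  | tru => rfl
  | fls => rfl
  | var v =>
      by_cases h : v = u
      · cases c <;> simp [Fml.substC, Fml.eval, h]
      · simp [Fml.substC, Fml.eval, h]
  | neg φ ih => simp [Fml.substC, Fml.eval, ih]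
  | conj φ ψ ih1 ih2 => simp [Fml.substC, Fml.eval, ih1, ih2]
  | disj φ ψ ih1 ih2 => simp [Fml.substC, Fml.eval, ih1, ih2]

lemma substC_vars {φ : Fml} {u : ℕ} {c : Bool} {v : ℕ}
    (h : v ∈ (φ.substC u c).vars) : v ∈ φ.vars ∧ v ≠ u := by
  induction φ with
  | tru => simp [Fml.substC, Fml.vars] at h
  | fls => simp [Fml.substC, Fml.vars] at h
  | var x =>
      by_cases hx : x = u
      · exfalso; cases c <;> simp [Fml.substC, Fml.vars, hx] at h
      · simp [Fml.substC, Fml.vars, hx] at h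
        subst h; exact ⟨by simp [Fml.vars], hx⟩
  | neg φ ih => exact ih h
  | conj φ ψ ih1 ih2 =>
      simp only [Fml.substC, Fml.vars, Finset.mem_union] at h ⊢
      rcases h with h | h
      · exact ⟨Or.inl (ih1 h).1, (ih1 h).2⟩
      · exact ⟨Or.inr (ih2 h).1, (ih2 h).2⟩
  | disj φ ψ ih1 ih2 =>
      simp only [Fml.substC, Fml.vars, Finset.mem_union] at h ⊢
      rcases h with h | h
      · exact ⟨Or.inl (ih1 h).1, (ih1 h).2⟩
      · exact ⟨Or.inr (ih2 h).1, (ih2 h).2⟩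

/-- Recursive game semantics. -/
def qeval : Prefix → Fml → Prop
  | [], φ => φ.eval (fun _ => false) = true
  | (q, v) :: P, φ =>
      if q then ∃ b, qeval P (φ.substC v b) else ∀ b, qeval P (φ.substC v b)

def flipP (P : Prefix) : Prefix := P.map (fun p => (!p.1, p.2))

lemma flipP_snd (P : Prefix) : (flipP P).map Prod.snd = P.map Prod.snd := by
  simp [flipP]

lemma mem_flipP {q : Bool} {x : ℕ} {P : Prefix} : (q, x) ∈ flipP P ↔ (!q, x) ∈ P := by
  constructor
  · intro h
    rcases List.mem_map.1 h with ⟨⟨r, v⟩, hm, he⟩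
    simp only [Prod.mk.injEq] at he
    obtain ⟨h1, h2⟩ := he
    have : r = !q := by cases r <;> cases q <;> simp_all
    subst this; subst h2; exact hm
  · intro h
    refine List.mem_map.2 ⟨(!q, x), h, ?_⟩
    simp

lemma univsBefore_flipP (P : Prefix) (x : ℕ) :
    univsBefore (flipP P) x = existsBefore P x := by
  induction P with
  | nil => rfl
  | cons p P ih =>
      obtain ⟨q, v⟩ := p
      have : flipP ((q, v) :: P) = (!q, v) :: flipP P := rfl
      rw [this]
      cases q <;> simp [univsBefore, existsBefore, ih]

lemma hbFalse_iff_skTrue_flip (P : Prefix) (φ : Fml) :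
    hbFalse P φ ↔ skTrue (flipP P) φ.neg := by
  unfold hbFalse skTrue
  constructor
  · rintro ⟨θ, hdep, hev⟩
    refine ⟨θ, ?_, ?_⟩
    · intro x hx τ τ' hag
      exact hdep x (by simpa using mem_flipP.1 hx) τ τ'
        (by rwa [univsBefore_flipP] at hag)
    · intro τ
      have heq : (fun w => if (true, w) ∈ flipP P then θ w τ else τ w)
          = (fun w => if (false, w) ∈ P then θ w τ else τ w) := by
        funext w; exact if_congr (by simpa using (mem_flipP (q := true))) rfl rfl
      rw [heq]
      simp [Fml.eval, hev τ]
  · rintro ⟨θ, hdep, hev⟩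
    refine ⟨θ, ?_, ?_⟩
    · intro y hy ε ε' hag
      refine hdep y (mem_flipP.2 (by simpa using hy)) ε ε' ?_
      rwa [univsBefore_flipP]
    · intro ε
      have h := hev ε
      have heq : (fun w => if (true, w) ∈ flipP P then θ w ε else ε w)
          = (fun w => if (false, w) ∈ P then θ w ε else ε w) := by
        funext w; exact if_congr (by simpa using (mem_flipP (q := true))) rfl rfl
      rw [heq] at h
      simpa [Fml.eval] using h

lemma substC_neg (φ : Fml) (u : ℕ) (c : Bool) :
    (Fml.neg φ).substC u c = Fml.neg (φ.substC u c) := rfl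

lemma qeval_flipP_neg (P : Prefix) (φ : Fml) :
    qeval (flipP P) φ.neg ↔ ¬ qeval P φ := by
  induction P generalizing φ with
  | nil => simp [qeval, flipP, Fml.eval]
  | cons p P ih =>
      obtain ⟨q, v⟩ := p
      have hfl : flipP ((q, v) :: P) = (!q, v) :: flipP P := rfl
      rw [hfl]
      cases q
      · show (∃ b, qeval (flipP P) ((Fml.neg φ).substC v b)) ↔ ¬ ∀ b, qeval P (φ.substC v b)
        simp only [substC_neg, ih]
        push_neg
        rfl
      · show (∀ b, qeval (flipP P) ((Fml.neg φ).substC v b)) ↔ ¬ ∃ b, qeval P (φ.substC v b)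
        simp only [substC_neg, ih]
        push_neg
        rfl


lemma univsBefore_subset : ∀ (P : Prefix) (x w : ℕ), w ∈ univsBefore P x → w ∈ P.map Prod.snd
  | [], x, w, h => by simp [univsBefore] at h
  | (q, v) :: P, x, w, h => by
      simp only [univsBefore] at h
      split at h
      · simp at h
      · split at h
        · exact List.mem_cons_of_mem _ (univsBefore_subset P x w h)
        · rcases Finset.mem_insert.1 h with h | h
          · simp [h]
          · exact List.mem_cons_of_mem _ (univsBefore_subset P x w h)

lemma skTrue_iff_qeval : ∀ (P : Prefix) (φ : Fml),
    (P.map Prod.snd).Nodup → (∀ v ∈ φ.vars, v ∈ P.map Prod.snd) →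
    (skTrue P φ ↔ qeval P φ)
  | [], φ, _, hcl => by
      have hv : ∀ α β : ℕ → Bool, φ.eval α = φ.eval β := by
        intro α β
        refine eval_congr' φ α β fun v hv => absurd (hcl v hv) (by simp)
      constructor
      · rintro ⟨σ, _, hev⟩
        have := hev (fun _ => false)
        show φ.eval _ = true
        rw [hv _ (fun w => if (true, w) ∈ ([] : Prefix) then σ w (fun _ => false) else false)]
        exact this
      · intro h
        refine ⟨fun _ _ => false, by simp, fun τ => ?_⟩
        rw [hv _ (fun _ => false)]
        exact h
  | (q, v) :: P, φ, hnd, hcl => by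
      have hndP : (P.map Prod.snd).Nodup := (List.nodup_cons.1 hnd).2
      have hvP : v ∉ P.map Prod.snd := (List.nodup_cons.1 hnd).1
      have hclb : ∀ b (w : ℕ), w ∈ (φ.substC v b).vars → w ∈ P.map Prod.snd := by
        intro b w hw
        obtain ⟨h1, h2⟩ := substC_vars hw
        have := hcl w h1
        simp only [List.map_cons, List.mem_cons] at this
        exact this.resolve_left h2
      have ihb : ∀ b, skTrue P (φ.substC v b) ↔ qeval P (φ.substC v b) :=
        fun b => skTrue_iff_qeval P (φ.substC v b) hndP (hclb b)
      -- membership helpers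
      have hmemP : ∀ (r : Bool) (x : ℕ), (r, x) ∈ P → x ≠ v := by
        intro r x hx he
        exact hvP (he ▸ List.mem_map.2 ⟨(r, x), hx, rfl⟩)
      have hmem_cons : ∀ (r : Bool) (w : ℕ), w ≠ v →
          (((r, w) ∈ (q, v) :: P) ↔ ((r, w) ∈ P)) := by
        intro r w hw
        simp [List.mem_cons, Prod.ext_iff, hw]
      cases q
      · -- universal head
        show skTrue ((false, v) :: P) φ ↔ ∀ b, qeval P (φ.substC v b)
        have htv : (true, v) ∉ ((false, v) :: P : Prefix) := by
          intro h
          rcases List.mem_cons.1 h with h | h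
          · exact absurd h (by simp)
          · exact hmemP true v h rfl
        constructor
        · rintro ⟨σ, hdep, hev⟩ b
          rw [← ihb b]
          refine ⟨fun x τ => σ x (fun w => if w = v then b else τ w), ?_, ?_⟩
          · intro x hx τ τ' hag
            have hxv : x ≠ v := hmemP true x hx
            refine hdep x (List.mem_cons_of_mem _ hx) _ _ ?_
            intro w hw
            have : univsBefore ((false, v) :: P) x = insert v (univsBefore P x) := by
              simp [univsBefore, (Ne.symm hxv)]
            rw [this] at hw
            rcases Finset.mem_insert.1 hw with h | h
            · simp [h]
            · have hwv : w ≠ v := by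
                rintro rfl
                exact hvP (univsBefore_subset P x w h)
              simp only [if_neg hwv]
              exact hag w h
          · intro τ
            rw [substC_eval]
            have h := hev (fun w => if w = v then b else τ w)
            convert h using 2
            funext w
            by_cases hw : w = v
            · subst hw
              rw [if_pos rfl, if_neg htv, if_pos rfl]
            · rw [if_neg hw]
              by_cases hmem : (true, w) ∈ P
              · rw [if_pos hmem, if_pos ((hmem_cons true w hw).2 hmem)]
              · rw [if_neg hmem, if_neg (fun hc => hmem ((hmem_cons true w hw).1 hc)),
                  if_neg hw]
        · intro hall
          choose σb hdepb hevb using fun b => (ihb b).2 (hall b)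
          refine ⟨fun x τ => σb (τ v) x τ, ?_, ?_⟩
          · intro x hx τ τ' hag
            have hx' : (true, x) ∈ P := by
              rcases List.mem_cons.1 hx with h | h
              · exact absurd h (by simp)
              · exact h
            have hxv : x ≠ v := hmemP true x hx'
            have hub : univsBefore ((false, v) :: P) x = insert v (univsBefore P x) := by
              simp [univsBefore, (Ne.symm hxv)]
            rw [hub] at hag
            have hτv : τ v = τ' v := hag v (Finset.mem_insert_self _ _)
            show σb (τ v) x τ = σb (τ' v) x τ'
            rw [← hτv]
            exact hdepb (τ v) x hx' τ τ' fun w hw => hag w (Finset.mem_insert_of_mem hw)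
          · intro τ
            have h := hevb (τ v) τ
            rw [substC_eval] at h
            convert h using 2
            funext w
            beta_reduce
            by_cases hw : w = v
            · subst hw
              rw [if_neg htv, if_pos rfl]
            · rw [if_neg hw]
              by_cases hmem : (true, w) ∈ P
              · rw [if_pos ((hmem_cons true w hw).2 hmem), if_pos hmem]
              · rw [if_neg (fun hc => hmem ((hmem_cons true w hw).1 hc)), if_neg hmem]
      · -- existential head
        show skTrue ((true, v) :: P) φ ↔ ∃ b, qeval P (φ.substC v b)
        have htv : (true, v) ∈ ((true, v) :: P : Prefix) := List.mem_cons_self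
        have hub : ∀ x, x ≠ v → univsBefore ((true, v) :: P) x = univsBefore P x := by
          intro x hx
          simp [univsBefore, (Ne.symm hx)]
        constructor
        · rintro ⟨σ, hdep, hev⟩
          have hconst : ∀ τ : ℕ → Bool, σ v τ = σ v (fun _ => false) := by
            intro τ
            refine hdep v htv _ _ ?_
            intro w hw
            simp [univsBefore] at hw
          refine ⟨σ v (fun _ => false), (ihb _).1 ⟨σ, ?_, ?_⟩⟩
          · intro x hx τ τ' hag
            have hxv : x ≠ v := hmemP true x hx
            refine hdep x (List.mem_cons_of_mem _ hx) τ τ' ?_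
            rwa [hub x hxv]
          · intro τ
            rw [substC_eval]
            have h := hev τ
            convert h using 2
            funext w
            by_cases hw : w = v
            · subst hw
              rw [if_pos rfl, if_pos htv, hconst τ]
            · rw [if_neg hw]
              by_cases hmem : (true, w) ∈ P
              · rw [if_pos hmem, if_pos ((hmem_cons true w hw).2 hmem)]
              · rw [if_neg hmem, if_neg (fun hc => hmem ((hmem_cons true w hw).1 hc))]
        · rintro ⟨b, hb⟩
          obtain ⟨σ, hdep, hev⟩ := (ihb b).2 hb
          refine ⟨fun x τ => if x = v then b else σ x τ, ?_, ?_⟩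
          · intro x hx τ τ' hag
            by_cases hxv : x = v
            · simp [hxv]
            · have hx' : (true, x) ∈ P := by
                rcases List.mem_cons.1 hx with h | h
                · exact absurd h (by simp [Prod.ext_iff, hxv])
                · exact h
              simp only [if_neg hxv]
              refine hdep x hx' τ τ' ?_
              rwa [hub x hxv] at hag
          · intro τ
            have h := hev τ
            rw [substC_eval] at h
            convert h using 2
            funext w
            beta_reduce
            by_cases hw : w = v
            · subst hw
              rw [if_pos htv, if_pos rfl, if_pos rfl]
            · rw [if_neg hw]
              by_cases hmem : (true, w) ∈ P
              · rw [if_pos ((hmem_cons true w hw).2 hmem), if_neg hw, if_pos hmem]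
              · rw [if_neg (fun hc => hmem ((hmem_cons true w hw).1 hc)), if_neg hmem,
                  if_neg hw]

end Aux

/-- A closed prenex QBF is false iff it has a set of Herbrand functions. -/
theorem qbf_false_iff_herbrand (P : Prefix) (φ : Fml)
    (hnd : (P.map Prod.snd).Nodup)
    (hcl : ∀ v ∈ φ.vars, v ∈ P.map Prod.snd) :
    ¬ skTrue P φ ↔ hbFalse P φ := by
  have h1 := skTrue_iff_qeval P φ hnd hcl
  have h2 : skTrue (flipP P) φ.neg ↔ qeval (flipP P) φ.neg := by
    refine skTrue_iff_qeval (flipP P) φ.neg (by rwa [flipP_snd]) ?_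
    intro v hv
    rw [flipP_snd]
    exact hcl v hv
  rw [h1, hbFalse_iff_skTrue_flip, h2, qeval_flipP_neg]
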